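/- Let R be a domain with fraction field K, A a matrix over R, R' a subring of K containing all entries of A, and K' the fraction field of R'. If A is partition regular over R, then A is partition regular over the rational function field K'(t). -/

import Mathlib

open BigOperators

/-- A matrix `A` over `S` is partition regular over the `S`-module `M` for `r` colours if
every colouring of `M` with `r` colours admits a nonzero monochromatic solution of `A m = 0`. -/
def IsPR {S : Type*} [CommRing S] {k l : ℕ} (A : Matrix (Fin k) (Fin l) S)
    (M : Type*) [AddCommGroup M] [Module S M] (r : ℕ) : Prop :=
  ∀ χ : M → Fin r, ∃ m : Fin l → M, m ≠ 0 ∧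
    (∀ i, ∑ j, A i j • m j = 0) ∧ ∀ j j', χ (m j) = χ (m j')

/-- Partition regularity for every (positive) finite number of colours. -/
def IsPRAll {S : Type*} [CommRing S] {k l : ℕ} (A : Matrix (Fin k) (Fin l) S)
    (M : Type*) [AddCommGroup M] [Module S M] : Prop :=
  ∀ r : ℕ, 1 ≤ r → IsPR A M r

open Filter in
/-- Compactness: if `A` is partition regular over `R` with `r` colours, then there is a single
finite set `S` such that every colouring admits a monochromatic nonzero solution inside `S`. -/
lemma exists_finset_pr {R : Type*} [CommRing R] {k l : ℕ} (A : Matrix (Fin k) (Fin l) R)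
    {r : ℕ} (h : IsPR A R r) :
    ∃ S : Finset R, ∀ χ : R → Fin r, ∃ n : Fin l → R, (∀ j, n j ∈ S) ∧ n ≠ 0 ∧
      (∀ i, ∑ j, A i j • n j = 0) ∧ ∀ j j', χ (n j) = χ (n j') := by
  classical
  by_contra hc
  have hc' : ∀ S : Finset R, ∃ χS : R → Fin r, ∀ n : Fin l → R,
      ¬ ((∀ j, n j ∈ S) ∧ n ≠ 0 ∧ (∀ i, ∑ j, A i j • n j = 0) ∧
        ∀ j j', χS (n j) = χS (n j')) := by
    intro S
    by_contra hS
    push_neg at hS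
    exact hc ⟨S, hS⟩
  choose χS hχS using hc'
  haveI : Nonempty (Finset R) := ⟨∅⟩
  haveI : (atTop : Filter (Finset R)).NeBot := atTop_neBot
  set U := Ultrafilter.of (atTop : Filter (Finset R)) with hU
  have hcol : ∀ x : R, ∃ c : Fin r, {S : Finset R | χS S x = c} ∈ U := by
    intro x
    have h1 : (⋃ c ∈ (Finset.univ : Finset (Fin r)), {S : Finset R | χS S x = c}) ∈ U := by
      have h2 : (⋃ c ∈ (Finset.univ : Finset (Fin r)), {S : Finset R | χS S x = c})
          = Set.univ := by
        ext S; simp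
      rw [h2]; exact Filter.univ_mem
    rcases (Ultrafilter.finite_biUnion_mem_iff (Finset.finite_toSet _)).mp h1 with ⟨c, _, hcm⟩
    exact ⟨c, hcm⟩
  choose χ hχ using hcol
  obtain ⟨n, hn0, hsol, hmono⟩ := h χ
  have hT : (⋂ j, {S : Finset R | χS S (n j) = χ (n j)}) ∈ U := by
    exact Filter.iInter_mem.mpr fun j => hχ (n j)
  have hT2 : {S : Finset R | Finset.image n Finset.univ ⊆ S} ∈ U := by
    have h3 : {S : Finset R | Finset.image n Finset.univ ≤ S} ∈ (atTop : Filter (Finset R)) :=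
      Filter.mem_atTop _
    exact Ultrafilter.of_le _ h3
  obtain ⟨S, hSmem⟩ := Ultrafilter.nonempty_of_mem (Filter.inter_mem hT hT2)
  rcases hSmem with ⟨hSa, hSb⟩
  refine hχS S n ⟨?_, hn0, hsol, ?_⟩
  · intro j
    exact hSb (Finset.mem_image_of_mem n (Finset.mem_univ j))
  · intro j j'
    have e1 : χS S (n j) = χ (n j) := Set.mem_iInter.mp hSa j
    have e2 : χS S (n j') = χ (n j') := Set.mem_iInter.mp hSa j'
    rw [e1, e2, hmono j j']

set_option synthInstance.maxHeartbeats 1000000 in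
set_option maxHeartbeats 2000000 in
/-- There is an injective, additive, `jmap.fieldRange`-semilinear embedding of the span of a
finite subset of `K` into `RatFunc K'`. -/
lemma exists_semilinear (K K' : Type*) [Field K] [Field K'] (jmap : K' →+* K)
    (s : Set K) (hs : s.Finite) :
    ∃ g : Submodule.span jmap.fieldRange s → RatFunc K',
      (∀ v, g v = 0 → v = 0) ∧
      (∀ u v, g (u + v) = g u + g v) ∧
      ∀ (x : K') (a : jmap.fieldRange) (v : Submodule.span jmap.fieldRange s),
        jmap x = (a : K) → g (a • v) = algebraMap K' (RatFunc K') x * g v := by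
  classical
  haveI hFD : FiniteDimensional jmap.fieldRange (Submodule.span jmap.fieldRange s) :=
    FiniteDimensional.span_of_finite _ hs
  set F := jmap.fieldRange with hF
  set V := Submodule.span F s with hVdef
  set N := Module.finrank F V with hN
  let b : Module.Basis (Fin N) F V := Module.finBasis F V
  have hjinj : Function.Injective jmap := jmap.injective
  have hjσ : ∀ y : F, jmap (Function.invFun jmap (y : K)) = (y : K) := by
    rintro ⟨y, hy⟩
    obtain ⟨x, hx⟩ := RingHom.mem_fieldRange.mp hy
    exact Function.invFun_eq ⟨x, hx⟩
  have hσ0 : ∀ y : F, Function.invFun jmap (y : K) = 0 → y = 0 := by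
    intro y hy
    have : jmap (Function.invFun jmap (y : K)) = 0 := by rw [hy, map_zero]
    have : (y : K) = 0 := by rw [← hjσ y, this]
    exact_mod_cast this
  have hσadd : ∀ y z : F, Function.invFun jmap ((y + z : F) : K)
      = Function.invFun jmap (y : K) + Function.invFun jmap (z : K) := by
    intro y z
    apply hjinj
    rw [hjσ, map_add, hjσ, hjσ]
    norm_cast
  have hcoeff : ∀ (c : Fin N → K') (i : Fin N),
      (∑ i' : Fin N, Polynomial.C (c i') * Polynomial.X ^ (i' : ℕ)).coeff (i : ℕ) = c i := by
    intro c i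
    rw [Polynomial.finset_sum_coeff, Finset.sum_eq_single i]
    · simp
    · intro i' _ hne
      have hne' : (i : ℕ) ≠ (i' : ℕ) := fun hcon => hne (Fin.val_injective hcon).symm
      simp [Polynomial.coeff_C_mul, Polynomial.coeff_X_pow, hne']
    · intro hi
      exact absurd (Finset.mem_univ i) hi
  refine ⟨fun v => algebraMap (Polynomial K') (RatFunc K')
      (∑ i : Fin N, Polynomial.C (Function.invFun jmap ((b.repr v i : F) : K))
        * Polynomial.X ^ (i : ℕ)), ?_, ?_, ?_⟩
  · -- injectivity at 0
    intro v hv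
    beta_reduce at hv
    have h1 : (∑ i : Fin N, Polynomial.C (Function.invFun jmap ((b.repr v i : F) : K))
        * Polynomial.X ^ (i : ℕ)) = 0 := by
      apply RatFunc.algebraMap_injective K'
      rw [hv, map_zero]
    have h2 : ∀ i : Fin N, Function.invFun jmap ((b.repr v i : F) : K) = 0 := by
      intro i
      have h3 := hcoeff (fun i' => Function.invFun jmap ((b.repr v i' : F) : K)) i
      rw [h1, Polynomial.coeff_zero] at h3
      exact h3.symm
    have h4 : b.repr v = 0 := by
      ext i
      rw [hσ0 _ (h2 i)]
      simp
    exact b.repr.map_eq_zero_iff.mp h4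
  · -- additivity
    intro u v
    beta_reduce
    rw [← map_add]
    congr 1
    rw [← Finset.sum_add_distrib]
    refine Finset.sum_congr rfl fun i _ => ?_
    rw [map_add, Finsupp.add_apply, hσadd, Polynomial.C_add, add_mul]
  · -- semilinearity
    intro x a v hx
    beta_reduce
    have hσmul : ∀ y : F, Function.invFun jmap ((a * y : F) : K)
        = x * Function.invFun jmap (y : K) := by
      intro y
      apply hjinj
      rw [hjσ, map_mul, hjσ, hx]
      norm_cast
    have h5 : (∑ i : Fin N, Polynomial.C (Function.invFun jmap ((b.repr (a • v) i : F) : K))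
          * Polynomial.X ^ (i : ℕ))
        = Polynomial.C x * ∑ i : Fin N,
            Polynomial.C (Function.invFun jmap ((b.repr v i : F) : K))
              * Polynomial.X ^ (i : ℕ) := by
      rw [Finset.mul_sum]
      refine Finset.sum_congr rfl fun i _ => ?_
      rw [map_smul, Finsupp.smul_apply, smul_eq_mul, hσmul, Polynomial.C_mul, mul_assoc]
    rw [h5, map_mul]
    rw [show (algebraMap (Polynomial K') (RatFunc K')) (Polynomial.C x)
      = algebraMap K' (RatFunc K') x from rfl]

set_option synthInstance.maxHeartbeats 1000000 in
set_option maxHeartbeats 2000000 in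
theorem pr_over_ratFunc {R : Type*} [CommRing R] [IsDomain R] {k l : ℕ}
    (A : Matrix (Fin k) (Fin l) R)
    (K : Type*) [Field K] [Algebra R K] [IsFractionRing R K]
    (R' : Subring K)
    (hA : ∀ i j, algebraMap R K (A i j) ∈ R')
    (K' : Type*) [Field K'] [Algebra R' K'] [IsFractionRing R' K']
    (h : IsPRAll A R) :
    IsPRAll
      (Matrix.of fun i j =>
        algebraMap K' (RatFunc K')
          (algebraMap R' K' ⟨algebraMap R K (A i j), hA i j⟩))
      (RatFunc K') := by
  intro r hr χ
  classical
  haveI : Nonempty (Fin r) := ⟨⟨0, hr⟩⟩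
  obtain ⟨S, hS⟩ := exists_finset_pr A (h r hr)
  have hinj : Function.Injective (R'.subtype : R' →+* K) := Subtype.coe_injective
  set jmap : K' →+* K := IsFractionRing.lift hinj with hjmapdef
  have hjalg : ∀ x : R', jmap (algebraMap R' K' x) = x :=
    fun x => IsFractionRing.lift_algebraMap hinj x
  obtain ⟨g, hginj, hgadd, hgsmul⟩ :=
    exists_semilinear K K' jmap (↑(S.image (algebraMap R K))) (Finset.finite_toSet _)
  set χ' : R → Fin r := fun y =>
    if hy : algebraMap R K y ∈ Submodule.span jmap.fieldRange
        (↑(S.image (algebraMap R K)) : Set K) then χ (g ⟨algebraMap R K y, hy⟩)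
    else Classical.arbitrary _ with hχ'def
  obtain ⟨n, hnS, hn0, hsol, hmono⟩ := hS χ'
  have hmem : ∀ j, algebraMap R K (n j) ∈ Submodule.span jmap.fieldRange
      (↑(S.image (algebraMap R K)) : Set K) :=
    fun j => Submodule.subset_span (Finset.mem_coe.mpr (Finset.mem_image_of_mem _ (hnS j)))
  have hmemF : ∀ i j, algebraMap R K (A i j) ∈ jmap.fieldRange :=
    fun i j => ⟨algebraMap R' K' ⟨algebraMap R K (A i j), hA i j⟩, hjalg _⟩
  have hg0 : g 0 = 0 := by
    have h1 := hgadd 0 0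
    rw [add_zero] at h1
    exact left_eq_add.mp h1
  refine ⟨fun j => g ⟨algebraMap R K (n j), hmem j⟩, ?_, ?_, ?_⟩
  · -- nonzero
    obtain ⟨j0, hj0⟩ := Function.ne_iff.mp hn0
    intro hzero
    have h1 : g ⟨algebraMap R K (n j0), hmem j0⟩ = 0 := congrFun hzero j0
    have h2 := hginj _ h1
    have h3 : algebraMap R K (n j0) = 0 := congrArg Subtype.val h2
    exact hj0 ((map_eq_zero_iff _ (IsFractionRing.injective R K)).mp h3)
  · -- the equations
    intro i
    have hstep : ∀ j : Fin l,
        (Matrix.of fun i j => algebraMap K' (RatFunc K')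
            (algebraMap R' K' ⟨algebraMap R K (A i j), hA i j⟩)) i j
          • g ⟨algebraMap R K (n j), hmem j⟩
        = g ((⟨algebraMap R K (A i j), hmemF i j⟩ : jmap.fieldRange)
            • ⟨algebraMap R K (n j), hmem j⟩) := by
      intro j
      rw [smul_eq_mul, Matrix.of_apply]
      exact (hgsmul _ _ _ (hjalg _)).symm
    have hsum0 : (∑ j, (⟨algebraMap R K (A i j), hmemF i j⟩ : jmap.fieldRange)
        • (⟨algebraMap R K (n j), hmem j⟩ : Submodule.span jmap.fieldRange
          (↑(S.image (algebraMap R K)) : Set K))) = 0 := by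
      have h7 := hsol i
      simp only [smul_eq_mul] at h7
      have h6 : ∀ j : Fin l, ((⟨algebraMap R K (A i j), hmemF i j⟩ : jmap.fieldRange)
          • ((⟨algebraMap R K (n j), hmem j⟩ : Submodule.span jmap.fieldRange
            (↑(S.image (algebraMap R K)) : Set K)) : K))
          = algebraMap R K (A i j * n j) := by
        intro j
        rw [map_mul]
        rfl
      apply Subtype.ext
      have h8 : ((∑ j, (⟨algebraMap R K (A i j), hmemF i j⟩ : jmap.fieldRange)
          • (⟨algebraMap R K (n j), hmem j⟩ : Submodule.span jmap.fieldRange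
            (↑(S.image (algebraMap R K)) : Set K)) : Submodule.span jmap.fieldRange
            (↑(S.image (algebraMap R K)) : Set K)) : K)
          = ∑ j, algebraMap R K (A i j * n j) := by
        rw [AddSubmonoidClass.coe_finset_sum]
        refine Finset.sum_congr rfl fun j _ => ?_
        rw [Submodule.coe_smul]
        exact h6 j
      rw [h8, ← map_sum, h7, map_zero]
      rfl
    calc ∑ j, (Matrix.of fun i j => algebraMap K' (RatFunc K')
            (algebraMap R' K' ⟨algebraMap R K (A i j), hA i j⟩)) i j
          • g ⟨algebraMap R K (n j), hmem j⟩
        = ∑ j, g ((⟨algebraMap R K (A i j), hmemF i j⟩ : jmap.fieldRange)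
            • ⟨algebraMap R K (n j), hmem j⟩) :=
          Finset.sum_congr rfl fun j _ => hstep j
      _ = g (∑ j, (⟨algebraMap R K (A i j), hmemF i j⟩ : jmap.fieldRange)
            • ⟨algebraMap R K (n j), hmem j⟩) :=
          (map_sum (AddMonoidHom.mk' g hgadd) _ _).symm
      _ = g 0 := by rw [hsum0]
      _ = 0 := hg0
  · -- monochromatic
    have hb : ∀ j, χ (g ⟨algebraMap R K (n j), hmem j⟩) = χ' (n j) := by
      intro j
      rw [hχ'def]
      simp only
      rw [dif_pos (hmem j)]
    intro j j'
    rw [hb j, hb j', hmono j j']
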